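/- Monotone chain from divergence to task speed-up (Theorem 1): let T be a probability measure over prefixes, and for each prefix s let p(·|s), q(·|s) be probability mass functions on a finite set V with q(x|s) > 0 whenever p(x|s) > 0, such that α(s) := Σ_{x∈V} min(p(x|s), q(x|s)) < 1 and moreover KL_T ≤ 2 and D_T ≤ 2 so that the arguments below lie in [0,1). Fix an integer γ ≥ 1 and c ∈ [0,1), and set S_T := E_{s∼T}[ f_γ(α(s)) / (1 + γc) ], α_T := E_{s∼T}[α(s)], KL_T := E_{s∼T}[KL(p(·|s)‖q(·|s))], and D_T := E_{s∼T}[ −Σ_{x∈V} p(x|s) log q(x|s) ]. Then S_T ≥ f_γ(α_T)/(1 + γc) ≥ f_γ(1 − √(KL_T/2))/(1 + γc) ≥ f_γ(1 − √(D_T/2))/(1 + γc). -/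

import Mathlib

open MeasureTheory

/-- Log-sum inequality over a finite set. -/
lemma log_sum_ineq {V : Type*} (A : Finset V) (p q : V → ℝ)
    (hp0 : ∀ x ∈ A, 0 ≤ p x) (hq0 : ∀ x ∈ A, 0 ≤ q x)
    (hac : ∀ x ∈ A, 0 < p x → 0 < q x) :
    (∑ x ∈ A, p x) * Real.log ((∑ x ∈ A, p x) / (∑ x ∈ A, q x)) ≤
      ∑ x ∈ A, p x * Real.log (p x / q x) := by
  set P := ∑ x ∈ A, p x with hP
  set Q := ∑ x ∈ A, q x with hQ
  by_cases hP0 : P = 0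
  · have hall : ∀ x ∈ A, p x = 0 :=
      (Finset.sum_eq_zero_iff_of_nonneg hp0).1 hP0
    rw [hP0]
    rw [Finset.sum_congr rfl (fun x hx => by rw [hall x hx, zero_mul])]
    simp
  · have hPpos : 0 < P := lt_of_le_of_ne (Finset.sum_nonneg hp0) (Ne.symm hP0)
    obtain ⟨x0, hx0A, hx0⟩ := Finset.exists_ne_zero_of_sum_ne_zero hP0
    have hpx0 : 0 < p x0 := lt_of_le_of_ne (hp0 x0 hx0A) (Ne.symm hx0)
    have hqx0 : 0 < q x0 := hac x0 hx0A hpx0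
    have hQpos : 0 < Q := lt_of_lt_of_le hqx0 (Finset.single_le_sum hq0 hx0A)
    have key : ∀ x ∈ A, p x - q x * (P / Q) ≤
        p x * Real.log (p x / q x) - p x * Real.log (P / Q) := by
      intro x hx
      by_cases hpx : p x = 0
      · rw [hpx]
        have hq' : 0 ≤ q x * (P / Q) :=
          mul_nonneg (hq0 x hx) (le_of_lt (by positivity))
        simp only [zero_mul, zero_sub, sub_zero]
        linarith
      · have hpxpos : 0 < p x := lt_of_le_of_ne (hp0 x hx) (Ne.symm hpx)
        have hqxpos : 0 < q x := hac x hx hpxpos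
        have ht : (0:ℝ) < (p x / q x) / (P / Q) := by positivity
        have hlog := Real.one_sub_inv_le_log_of_pos ht
        have heq : Real.log ((p x / q x) / (P / Q)) =
            Real.log (p x / q x) - Real.log (P / Q) :=
          Real.log_div (by positivity) (by positivity)
        rw [heq] at hlog
        have hinv : ((p x / q x) / (P / Q))⁻¹ = (q x * P) / (p x * Q) := by
          field_simp
        rw [hinv] at hlog
        have := mul_le_mul_of_nonneg_left hlog (le_of_lt hpxpos)
        calc p x - q x * (P / Q) = p x * (1 - q x * P / (p x * Q)) := by
              field_simp
          _ ≤ p x * (Real.log (p x / q x) - Real.log (P / Q)) := this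
          _ = p x * Real.log (p x / q x) - p x * Real.log (P / Q) := by ring
    have hsum := Finset.sum_le_sum key
    have h1 : ∑ x ∈ A, (p x - q x * (P / Q)) = P - Q * (P / Q) := by
      rw [Finset.sum_sub_distrib, ← Finset.sum_mul]
    have h2 : Q * (P / Q) = P := by field_simp
    have h3 : ∑ x ∈ A, (p x * Real.log (p x / q x) - p x * Real.log (P / Q)) =
        (∑ x ∈ A, p x * Real.log (p x / q x)) - P * Real.log (P / Q) := by
      rw [Finset.sum_sub_distrib, ← Finset.sum_mul]
    rw [h1, h2, h3] at hsum
    linarith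

/-- Binary Pinsker inequality. -/
lemma binary_pinsker {a b : ℝ} (hb : 0 < b) (hba : b ≤ a) (ha : a ≤ 1) :
    2 * (a - b) ^ 2 ≤ a * Real.log (a / b) + (1 - a) * Real.log ((1 - a) / (1 - b)) := by
  rcases eq_or_lt_of_le hba with heq | hlt
  · subst heq
    simp [div_self (ne_of_gt hb)]
  · have hapos : 0 < a := lt_trans hb hlt
    rcases eq_or_lt_of_le ha with ha1 | ha1
    · -- a = 1 case
      subst ha1
      have hb1 : b < 1 := hlt
      set g : ℝ → ℝ := fun t => -Real.log t - 2 * (1 - t) ^ 2 with hg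
      have hanti : AntitoneOn g (Set.Icc b 1) := by
        apply antitoneOn_of_deriv_nonpos (convex_Icc b 1)
        · apply ContinuousOn.sub
          · apply ContinuousOn.neg
            apply ContinuousOn.log continuousOn_id
            intro t ht
            exact ne_of_gt (lt_of_lt_of_le hb ht.1)
          · exact (continuous_const.mul ((continuous_const.sub continuous_id).pow 2)).continuousOn
        · intro t ht
          rw [interior_Icc] at ht
          have ht0 : 0 < t := lt_trans hb ht.1
          have hd : HasDerivAt g (-t⁻¹ - 2 * (2 * (1 - t) ^ 1 * (-1))) t := by
            exact ((Real.hasDerivAt_log (ne_of_gt ht0)).neg).sub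
              ((((hasDerivAt_id t).const_sub 1).pow 2).const_mul 2)
          exact hd.differentiableAt.differentiableWithinAt
        · intro t ht
          rw [interior_Icc] at ht
          have ht0 : 0 < t := lt_trans hb ht.1
          have hd : HasDerivAt g (-t⁻¹ - 2 * (2 * (1 - t) ^ 1 * (-1))) t :=
            ((Real.hasDerivAt_log (ne_of_gt ht0)).neg).sub
              ((((hasDerivAt_id t).const_sub 1).pow 2).const_mul 2)
          rw [hd.deriv]
          have h4 : 4 * (1 - t) ≤ 1 / t := by
            rw [le_div_iff₀ ht0]
            nlinarith [sq_nonneg (2 * t - 1)]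
          have : t⁻¹ = 1 / t := (one_div t).symm
          nlinarith [h4]
      have := hanti (Set.mem_Icc.2 ⟨le_refl b, le_of_lt hb1⟩)
        (Set.mem_Icc.2 ⟨le_of_lt hlt, le_refl 1⟩) (le_of_lt hlt)
      have hg1 : g 1 = 0 := by simp [hg]
      have hgb : g b = -Real.log b - 2 * (1 - b) ^ 2 := rfl
      have hmain : 2 * (1 - b) ^ 2 ≤ -Real.log b := by
        rw [hg1] at this; rw [hgb] at this; linarith
      have : Real.log (1 / b) = -Real.log b := by
        rw [one_div, Real.log_inv]
      simp only [sub_self, zero_mul, add_zero, one_mul]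
      rw [this]; exact hmain
    · -- a < 1 case
      have h1a : 0 < 1 - a := by linarith
      set h : ℝ → ℝ := fun t => -(a * Real.log t) - (1 - a) * Real.log (1 - t)
        - 2 * (a - t) ^ 2 with hh
      have hderiv : ∀ t ∈ Set.Ioo b a, HasDerivAt h
          (-(a * t⁻¹) - (1 - a) * ((1 - t)⁻¹ * -1) - 2 * (2 * (a - t) ^ 1 * (-1))) t := by
        intro t ht
        have ht0 : 0 < t := lt_trans hb ht.1
        have ht1 : t < 1 := lt_of_lt_of_le ht.2 ha
        have H1 : HasDerivAt (fun t : ℝ => a * Real.log t) (a * t⁻¹) t :=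
          (Real.hasDerivAt_log (ne_of_gt ht0)).const_mul a
        have Hsub : HasDerivAt (fun t : ℝ => 1 - t) (-1) t := (hasDerivAt_id t).const_sub 1
        have H2 : HasDerivAt (fun t : ℝ => Real.log (1 - t)) ((1 - t)⁻¹ * -1) t :=
          (Real.hasDerivAt_log (by linarith : (1:ℝ) - t ≠ 0)).comp t Hsub
        have H3 : HasDerivAt (fun t : ℝ => 2 * (a - t) ^ 2)
            (2 * (2 * (a - t) ^ 1 * (-1))) t :=
          (((hasDerivAt_id t).const_sub a).pow 2).const_mul 2
        exact (H1.neg.sub (H2.const_mul (1 - a))).sub H3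
      have hanti : AntitoneOn h (Set.Icc b a) := by
        apply antitoneOn_of_deriv_nonpos (convex_Icc b a)
        · apply ContinuousOn.sub
          apply ContinuousOn.sub
          · apply ContinuousOn.neg
            apply ContinuousOn.mul continuousOn_const
            apply ContinuousOn.log continuousOn_id
            intro t ht
            exact ne_of_gt (lt_of_lt_of_le hb ht.1)
          · apply ContinuousOn.mul continuousOn_const
            apply ContinuousOn.log (continuous_const.sub continuous_id).continuousOn
            intro t ht
            have : t < 1 := lt_of_le_of_lt ht.2 ha1
            exact sub_ne_zero.2 (ne_of_gt this)
          · exact (continuous_const.mul ((continuous_const.sub continuous_id).pow 2)).continuousOn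
        · intro t ht
          rw [interior_Icc] at ht
          exact (hderiv t ht).differentiableAt.differentiableWithinAt
        · intro t ht
          rw [interior_Icc] at ht
          rw [(hderiv t ht).deriv]
          have ht0 : 0 < t := lt_trans hb ht.1
          have ht1 : t < 1 := lt_of_lt_of_le ht.2 ha
          have ht0' : t ≠ 0 := ne_of_gt ht0
          have ht1' : (1:ℝ) - t ≠ 0 := by linarith
          have hkey : -(a * t⁻¹) - (1 - a) * ((1 - t)⁻¹ * -1) - 2 * (2 * (a - t) ^ 1 * (-1))
              = (t - a) / (t * (1 - t)) + 4 * (a - t) := by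
            field_simp
            ring
          rw [hkey]
          have hfac : 0 ≤ (a - t) * (1 - 2 * t) ^ 2 :=
            mul_nonneg (by linarith [ht.2]) (sq_nonneg _)
          have hdivle : (t - a) / (t * (1 - t)) ≤ 4 * (t - a) := by
            rw [div_le_iff₀ (by nlinarith)]
            nlinarith [hfac]
          linarith
      have hmem_b : b ∈ Set.Icc b a := Set.mem_Icc.2 ⟨le_refl b, hba⟩
      have hmem_a : a ∈ Set.Icc b a := Set.mem_Icc.2 ⟨hba, le_refl a⟩
      have hba' := hanti hmem_b hmem_a hba
      have hha : h a = -(a * Real.log a) - (1 - a) * Real.log (1 - a) := by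
        simp [hh]
      have hhb : h b = -(a * Real.log b) - (1 - a) * Real.log (1 - b)
          - 2 * (a - b) ^ 2 := rfl
      have hlog1 : Real.log (a / b) = Real.log a - Real.log b :=
        Real.log_div (ne_of_gt hapos) (ne_of_gt hb)
      have hlog2 : Real.log ((1 - a) / (1 - b)) = Real.log (1 - a) - Real.log (1 - b) :=
        Real.log_div (ne_of_gt h1a) (by linarith)
      rw [hlog1, hlog2]
      rw [hha, hhb] at hba'
      nlinarith [hba']

/-- Pointwise Pinsker inequality for finite distributions. -/
lemma pinsker_finite {V : Type*} [Fintype V] (p q : V → ℝ)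
    (hp0 : ∀ x, 0 ≤ p x) (hq0 : ∀ x, 0 ≤ q x)
    (hp1 : ∑ x, p x = 1) (hq1 : ∑ x, q x = 1)
    (hac : ∀ x, 0 < p x → 0 < q x) :
    2 * (1 - ∑ x, min (p x) (q x)) ^ 2 ≤ ∑ x, p x * Real.log (p x / q x) := by
  classical
  set A : Finset V := Finset.univ.filter (fun x => q x < p x) with hA
  set a := ∑ x ∈ A, p x with ha
  set b := ∑ x ∈ A, q x with hbdef
  have hsplit_p : a + ∑ x ∈ Finset.univ.filter (fun x => ¬ q x < p x), p x = 1 := by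
    rw [ha, Finset.sum_filter_add_sum_filter_not, hp1]
  have hsplit_q : b + ∑ x ∈ Finset.univ.filter (fun x => ¬ q x < p x), q x = 1 := by
    rw [hbdef, Finset.sum_filter_add_sum_filter_not, hq1]
  have hmin : ∑ x, min (p x) (q x) = b + (1 - a) := by
    rw [← Finset.sum_filter_add_sum_filter_not Finset.univ (fun x => q x < p x)
      (fun x => min (p x) (q x))]
    congr 1
    · exact Finset.sum_congr rfl (fun x hx => by
        have := (Finset.mem_filter.1 hx).2
        exact min_eq_right (le_of_lt this))
    · rw [Finset.sum_congr rfl (fun x hx => min_eq_left (not_lt.1 (Finset.mem_filter.1 hx).2))]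
      linarith
  have h1ma : 1 - ∑ x, min (p x) (q x) = a - b := by rw [hmin]; ring
  have hKLsplit : a * Real.log (a / b) +
      (1 - a) * Real.log ((1 - a) / (1 - b)) ≤ ∑ x, p x * Real.log (p x / q x) := by
    rw [← Finset.sum_filter_add_sum_filter_not Finset.univ (fun x => q x < p x)
      (fun x => p x * Real.log (p x / q x))]
    have e1 : (1:ℝ) - a = ∑ x ∈ Finset.univ.filter (fun x => ¬ q x < p x), p x := by
      linarith
    have e2 : (1:ℝ) - b = ∑ x ∈ Finset.univ.filter (fun x => ¬ q x < p x), q x := by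
      linarith
    apply add_le_add
    · exact log_sum_ineq A p q (fun x _ => hp0 x) (fun x _ => hq0 x)
        (fun x _ hx => hac x hx)
    · rw [e1, e2]
      exact log_sum_ineq _ p q (fun x _ => hp0 x) (fun x _ => hq0 x)
        (fun x _ hx => hac x hx)
  rw [h1ma]
  by_cases hAne : A.Nonempty
  · have hbpos : 0 < b := by
      apply Finset.sum_pos _ hAne
      intro x hx
      have hlt := (Finset.mem_filter.1 hx).2
      exact hac x (lt_of_le_of_lt (hq0 x) hlt)
    have hble : b ≤ a :=
      Finset.sum_le_sum (fun x hx => le_of_lt (Finset.mem_filter.1 hx).2)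
    have hale : a ≤ 1 := by
      have : 0 ≤ ∑ x ∈ Finset.univ.filter (fun x => ¬ q x < p x), p x :=
        Finset.sum_nonneg (fun x _ => hp0 x)
      linarith
    exact le_trans (binary_pinsker hbpos hble hale) hKLsplit
  · have hAempty : A = ∅ := Finset.not_nonempty_iff_eq_empty.1 hAne
    have ha0 : a = 0 := by rw [ha, hAempty]; simp
    have hb0 : b = 0 := by rw [hbdef, hAempty]; simp
    rw [ha0, hb0]
    have := log_sum_ineq Finset.univ p q (fun x _ => hp0 x) (fun x _ => hq0 x)
      (fun x _ hx => hac x hx)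
    rw [hp1, hq1] at this
    simp at this
    simpa using this

/-- Jensen for powers on a probability space with `f` valued in `[0,1]`. -/
lemma pow_integral_le {Ω : Type*} [MeasurableSpace Ω] (T : Measure Ω) [IsProbabilityMeasure T]
    (f : Ω → ℝ) (hf : Integrable f T) (h0 : ∀ s, 0 ≤ f s) (h1 : ∀ s, f s ≤ 1) (k : ℕ) :
    (∫ s, f s ∂T) ^ k ≤ ∫ s, f s ^ k ∂T := by
  have hint : Integrable (fun s => f s ^ k) T := by
    apply (integrable_const (1:ℝ)).mono' (hf.aestronglyMeasurable.pow k)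
    filter_upwards with s
    simp only [Pi.pow_apply]
    rw [Real.norm_eq_abs, abs_pow]
    apply pow_le_one₀ (abs_nonneg _)
    rw [abs_le]
    exact ⟨by linarith [h0 s], h1 s⟩
  have hconv : ConvexOn ℝ (Set.Icc (0:ℝ) 1) (fun x : ℝ => x ^ k) :=
    (convexOn_pow k).subset Set.Icc_subset_Ici_self (convex_Icc 0 1)
  have := hconv.map_integral_le (μ := T) (f := f)
    ((continuous_pow k).continuousOn) isClosed_Icc
    (Filter.Eventually.of_forall fun s => Set.mem_Icc.2 ⟨h0 s, h1 s⟩) hf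
    (by exact hint)
  exact this

/-- Monotone chain from divergence to task speed-up (Theorem 1): with
`α(s) := ∑ x, min (p s x) (q s x) < 1`, `f_γ(a) := ∑_{k=0}^{γ} a^k`,
`S_T := E_{s∼T}[f_γ(α(s)) / (1 + γc)]`, `α_T := E_{s∼T}[α(s)]`,
`KL_T := E_{s∼T}[KL(p(·|s)‖q(·|s))]`, `D_T := E_{s∼T}[-∑ x, p s x * log (q s x)]`,
and assuming `KL_T ≤ 2` and `D_T ≤ 2` (so the square-root arguments lie in `[0,1)`),
`S_T ≥ f_γ(α_T)/(1+γc) ≥ f_γ(1 - √(KL_T/2))/(1+γc) ≥ f_γ(1 - √(D_T/2))/(1+γc)`. -/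
theorem monotone_chain_divergence_speedup {Ω : Type*} [MeasurableSpace Ω]
    (T : Measure Ω) [IsProbabilityMeasure T]
    {V : Type*} [Fintype V]
    (p q : Ω → V → ℝ)
    (hp0 : ∀ s x, 0 ≤ p s x) (hq0 : ∀ s x, 0 ≤ q s x)
    (hp1 : ∀ s, ∑ x, p s x = 1) (hq1 : ∀ s, ∑ x, q s x = 1)
    (hac : ∀ s x, 0 < p s x → 0 < q s x)
    (γ : ℕ) (hγ : 1 ≤ γ) (c : ℝ) (hc0 : 0 ≤ c) (hc1 : c < 1)
    (α : Ω → ℝ) (hα : ∀ s, α s = ∑ x, min (p s x) (q s x))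
    (hαlt : ∀ s, α s < 1)
    (S_T : ℝ)
    (hS : S_T = ∫ s, (∑ k ∈ Finset.range (γ + 1), α s ^ k) / (1 + (γ : ℝ) * c) ∂T)
    (α_T : ℝ) (hαT : α_T = ∫ s, α s ∂T)
    (KL_T : ℝ) (hKL : KL_T = ∫ s, ∑ x, p s x * Real.log (p s x / q s x) ∂T)
    (D_T : ℝ) (hD : D_T = ∫ s, -∑ x, p s x * Real.log (q s x) ∂T)
    (hKL2 : KL_T ≤ 2) (hD2 : D_T ≤ 2)
    (hintα : Integrable α T)
    (hintf : Integrable (fun s => ∑ k ∈ Finset.range (γ + 1), α s ^ k) T)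
    (hintKL : Integrable (fun s => ∑ x, p s x * Real.log (p s x / q s x)) T)
    (hintD : Integrable (fun s => -∑ x, p s x * Real.log (q s x)) T) :
    S_T ≥ (∑ k ∈ Finset.range (γ + 1), α_T ^ k) / (1 + (γ : ℝ) * c) ∧
    (∑ k ∈ Finset.range (γ + 1), α_T ^ k) / (1 + (γ : ℝ) * c) ≥
      (∑ k ∈ Finset.range (γ + 1), (1 - Real.sqrt (KL_T / 2)) ^ k) / (1 + (γ : ℝ) * c) ∧
    (∑ k ∈ Finset.range (γ + 1), (1 - Real.sqrt (KL_T / 2)) ^ k) / (1 + (γ : ℝ) * c) ≥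
      (∑ k ∈ Finset.range (γ + 1), (1 - Real.sqrt (D_T / 2)) ^ k) / (1 + (γ : ℝ) * c) := by
  have hd : (0:ℝ) < 1 + (γ : ℝ) * c := by positivity
  have hα0 : ∀ s, 0 ≤ α s := fun s => by
    rw [hα]
    exact Finset.sum_nonneg fun x _ => le_min (hp0 s x) (hq0 s x)
  have hα1 : ∀ s, α s ≤ 1 := fun s => le_of_lt (hαlt s)
  -- integrability of powers of α
  have hpowint : ∀ k : ℕ, Integrable (fun s => α s ^ k) T := by
    intro k
    apply (integrable_const (1:ℝ)).mono' (hintα.aestronglyMeasurable.pow k)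
    filter_upwards with s
    simp only [Pi.pow_apply]
    rw [Real.norm_eq_abs, abs_pow]
    exact pow_le_one₀ (abs_nonneg _) (abs_le.2 ⟨by linarith [hα0 s], hα1 s⟩)
  -- Part 1 : Jensen for each power
  have hjensen : ∀ k : ℕ, α_T ^ k ≤ ∫ s, α s ^ k ∂T := fun k => by
    rw [hαT]; exact pow_integral_le T α hintα hα0 hα1 k
  have hpart1sum : (∑ k ∈ Finset.range (γ + 1), α_T ^ k) ≤
      ∫ s, ∑ k ∈ Finset.range (γ + 1), α s ^ k ∂T := by
    rw [integral_finset_sum _ (fun k _ => hpowint k)]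
    exact Finset.sum_le_sum fun k _ => hjensen k
  have hpart1 : (∑ k ∈ Finset.range (γ + 1), α_T ^ k) / (1 + (γ : ℝ) * c) ≤ S_T := by
    rw [hS]
    rw [MeasureTheory.integral_div]
    exact div_le_div_of_nonneg_right hpart1sum hd.le |>.trans_eq rfl
  -- bounds on α_T
  have hαT1 : α_T ≤ 1 := by
    rw [hαT]
    calc ∫ s, α s ∂T ≤ ∫ _, (1:ℝ) ∂T := integral_mono hintα (integrable_const 1) hα1
      _ = 1 := by simp
  have hαT0 : 0 ≤ α_T := by
    rw [hαT]; exact integral_nonneg hα0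
  -- Pinsker pointwise
  have hptw : ∀ s, 2 * (1 - α s) ^ 2 ≤ ∑ x, p s x * Real.log (p s x / q s x) := fun s => by
    rw [hα]
    exact pinsker_finite (p s) (q s) (hp0 s) (hq0 s) (hp1 s) (hq1 s) (hac s)
  -- Jensen for the square of (1 - α)
  have hsub_int : Integrable (fun s => 1 - α s) T := (integrable_const 1).sub hintα
  have hsq : (∫ s, (1 - α s) ∂T) ^ 2 ≤ ∫ s, (1 - α s) ^ 2 ∂T :=
    pow_integral_le T (fun s => 1 - α s) hsub_int
      (fun s => show (0:ℝ) ≤ 1 - α s by linarith [hα1 s])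
      (fun s => show (1:ℝ) - α s ≤ 1 by linarith [hα0 s]) 2
  have hintsub : ∫ s, (1 - α s) ∂T = 1 - α_T := by
    rw [hαT, integral_sub (integrable_const 1) hintα]; simp
  have hsqint : Integrable (fun s => (1 - α s) ^ 2) T := by
    apply (integrable_const (1:ℝ)).mono' (hsub_int.aestronglyMeasurable.pow 2)
    filter_upwards with s
    simp only [Pi.pow_apply]
    rw [Real.norm_eq_abs, abs_pow]
    exact pow_le_one₀ (abs_nonneg _) (abs_le.2 ⟨by linarith [hα1 s], by linarith [hα0 s]⟩)
  have hsqKL : ∫ s, (1 - α s) ^ 2 ∂T ≤ KL_T / 2 := by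
    rw [hKL, ← MeasureTheory.integral_div]
    exact integral_mono hsqint (hintKL.div_const 2) fun s => by
      have := hptw s; simp only; linarith
  have hKLbound : (1 - α_T) ^ 2 ≤ KL_T / 2 := by
    rw [← hintsub]; exact le_trans hsq hsqKL
  have hαT_ge : 1 - Real.sqrt (KL_T / 2) ≤ α_T := by
    have h1 : 1 - α_T ≤ Real.sqrt (KL_T / 2) := by
      have := Real.sqrt_le_sqrt hKLbound
      rwa [Real.sqrt_sq (by linarith)] at this
    linarith
  have hKLge : 0 ≤ 1 - Real.sqrt (KL_T / 2) := by
    have : Real.sqrt (KL_T / 2) ≤ 1 := Real.sqrt_le_one.2 (by linarith)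
    linarith
  have hpart2 : (∑ k ∈ Finset.range (γ + 1), (1 - Real.sqrt (KL_T / 2)) ^ k) ≤
      ∑ k ∈ Finset.range (γ + 1), α_T ^ k :=
    Finset.sum_le_sum fun k _ => pow_le_pow_left₀ hKLge hαT_ge k
  -- Part 3 : KL ≤ D
  have hKLD : KL_T ≤ D_T := by
    rw [hKL, hD]
    apply integral_mono hintKL hintD
    intro s
    simp only
    rw [← Finset.sum_neg_distrib]
    apply Finset.sum_le_sum
    intro x _
    by_cases hpx : p s x = 0
    · simp [hpx]
    · have hppos : 0 < p s x := lt_of_le_of_ne (hp0 s x) (Ne.symm hpx)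
      have hqpos : 0 < q s x := hac s x hppos
      rw [Real.log_div (ne_of_gt hppos) (ne_of_gt hqpos)]
      have hple : p s x ≤ 1 := by
        have := Finset.single_le_sum (fun y (_ : y ∈ Finset.univ) => hp0 s y)
          (Finset.mem_univ x)
        rw [hp1 s] at this; exact this
      have hlognp : Real.log (p s x) ≤ 0 := Real.log_nonpos (le_of_lt hppos) hple
      nlinarith [mul_nonpos_of_nonneg_of_nonpos (hp0 s x) hlognp]
  have hDge : 0 ≤ 1 - Real.sqrt (D_T / 2) := by
    have : Real.sqrt (D_T / 2) ≤ 1 := Real.sqrt_le_one.2 (by linarith)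
    linarith
  have hsqrtmono : 1 - Real.sqrt (D_T / 2) ≤ 1 - Real.sqrt (KL_T / 2) := by
    have := Real.sqrt_le_sqrt (by linarith : KL_T / 2 ≤ D_T / 2)
    linarith
  have hpart3 : (∑ k ∈ Finset.range (γ + 1), (1 - Real.sqrt (D_T / 2)) ^ k) ≤
      ∑ k ∈ Finset.range (γ + 1), (1 - Real.sqrt (KL_T / 2)) ^ k :=
    Finset.sum_le_sum fun k _ => pow_le_pow_left₀ hDge hsqrtmono k
  refine ⟨hpart1, ?_, ?_⟩
  · exact div_le_div_of_nonneg_right hpart2 hd.le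
  · exact div_le_div_of_nonneg_right hpart3 hd.le
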